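/- The series ∑_{k=2}^{∞} k · (1 − (2^k − 2)/2^k) of real numbers converges and has sum 3. -/

import Mathlib

theorem stmt_7 :
    HasSum
      (fun k : ℕ =>
        ((k + 2 : ℕ) : ℝ) * (1 - ((2 : ℝ) ^ (k + 2) - 2) / (2 : ℝ) ^ (k + 2)))
      3 := by
  have hr : ‖(1/2 : ℝ)‖ < 1 := by norm_num
  have h1 : HasSum (fun k : ℕ => (k : ℝ) * (1/2 : ℝ) ^ k) 2 := by
    have := hasSum_coe_mul_geometric_of_norm_lt_one (r := (1/2 : ℝ)) hr
    norm_num at this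
    convert this using 2 <;> norm_num
  have h2 : HasSum (fun k : ℕ => (1/2 : ℝ) ^ k) 2 := by
    have := hasSum_geometric_of_lt_one (r := (1/2 : ℝ)) (by norm_num) (by norm_num)
    norm_num at this
    convert this using 2 <;> norm_num
  have h := (h1.mul_left (1/2)).add h2
  norm_num at h
  convert h using 2 with k
  case e'_3 => rfl
  have hp : (2 : ℝ) ^ (k + 2) ≠ 0 := by positivity
  have h2k : ((1:ℝ)/2) ^ k = 1 / 2 ^ k := by
    rw [div_pow, one_pow]
  push_cast
  rw [h2k]
  have hk : (2:ℝ) ^ k ≠ 0 := by positivity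
  field_simp
  ring
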